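/- Fix ε, δ ∈ (0,1), r ∈ (0,1/2) with rN ∈ ℕ, and let H be the p-spin Gaussian process on {-1,1}^N. Then P(∃ σ₀ ∈ L_ε : min_{τ ∈ S_r(σ₀)} G_{σ₀}(τ) < -N β_c(1-ε)δ(1-c_p(r))) ≤ 2^N Φ(√N β_c(1-ε)) · C(N, rN) · Φ(√N β_c(1-ε)δ·(1-c_p(r))/√(1-c_p(r)²)). -/

import Mathlib

open MeasureTheory ProbabilityTheory Real Finset

def hamDist {N : ℕ} (σ τ : Fin N → Bool) : ℕ :=
  (Finset.univ.filter fun i => σ i ≠ τ i).card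

noncomputable def covFn (p : ℕ) (x : ℝ) : ℝ := (1 - x / 2) ^ p

noncomputable def betaC : ℝ := Real.sqrt (2 * Real.log 2)

noncomputable def gaussTail (u : ℝ) : ℝ :=
  (Real.sqrt (2 * Real.pi))⁻¹ * ∫ x in Set.Ici u, Real.exp (-x ^ 2 / 2)

open scoped NNReal ENNReal

lemma gauss_tail_one (u : ℝ) : ((gaussianReal 0 1) (Set.Ici u)).toReal = gaussTail u := by
  rw [gaussianReal_apply_eq_integral 0 one_ne_zero,
    ENNReal.toReal_ofReal (setIntegral_nonneg measurableSet_Ici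
      fun x _ => gaussianPDFReal_nonneg _ _ _)]
  unfold gaussTail
  rw [← integral_const_mul]
  congr 1
  ext x
  simp [gaussianPDFReal]

lemma gauss_neg (u : ℝ) :
    (gaussianReal 0 1) (Set.Iio (-u)) = (gaussianReal 0 1) (Set.Ici u) := by
  have hmap : (gaussianReal (0:ℝ) (1:ℝ≥0)).map (fun x => (-1 : ℝ) * x) = gaussianReal 0 1 := by
    rw [gaussianReal_map_const_mul]
    norm_num
  have h1 : (gaussianReal (0:ℝ) (1:ℝ≥0)) (Set.Iio (-u))
      = (gaussianReal 0 1) (Set.Ioi u) := by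
    conv_lhs => rw [← hmap]
    rw [Measure.map_apply (measurable_const_mul _) measurableSet_Iio]
    congr 1
    ext x
    simp
  have h0 : (gaussianReal (0:ℝ) (1:ℝ≥0)) {u} = 0 :=
    gaussianReal_absolutelyContinuous 0 one_ne_zero Real.volume_singleton
  have h2 : (gaussianReal (0:ℝ) (1:ℝ≥0)) (Set.Ici u) = (gaussianReal 0 1) (Set.Ioi u) := by
    refine le_antisymm ?_ (measure_mono Set.Ioi_subset_Ici_self)
    have hsub : Set.Ici u ⊆ {u} ∪ Set.Ioi u := by
      intro x hx
      rcases eq_or_lt_of_le (Set.mem_Ici.mp hx) with h | h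
      · exact Or.inl (by simp [h.symm])
      · exact Or.inr h
    calc (gaussianReal (0:ℝ) (1:ℝ≥0)) (Set.Ici u) ≤ _ := measure_mono hsub
      _ ≤ (gaussianReal (0:ℝ) (1:ℝ≥0)) {u} + (gaussianReal 0 1) (Set.Ioi u) := measure_union_le _ _
      _ = (gaussianReal 0 1) (Set.Ioi u) := by rw [h0, zero_add]
  rw [h1, h2]

lemma gauss_tail_var (v : ℝ≥0) (hv : v ≠ 0) (t : ℝ) :
    ((gaussianReal 0 v) (Set.Iio (-t))).toReal = gaussTail (t / Real.sqrt v) := by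
  have hv0 : (0:ℝ) < (v:ℝ) := by
    exact_mod_cast pos_iff_ne_zero.mpr hv
  have hs : (0:ℝ) < Real.sqrt v := Real.sqrt_pos.mpr hv0
  have hmap : (gaussianReal (0:ℝ) (1:ℝ≥0)).map (fun x => Real.sqrt v * x) = gaussianReal 0 v := by
    rw [gaussianReal_map_const_mul]
    rw [mul_zero]
    congr 1
    rw [mul_one]
    ext
    exact Real.sq_sqrt hv0.le
  rw [← hmap, Measure.map_apply (measurable_const_mul _) measurableSet_Iio]
  have hpre : (fun x => Real.sqrt v * x) ⁻¹' (Set.Iio (-t)) = Set.Iio (-(t / Real.sqrt v)) := by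
    ext x
    simp only [Set.mem_preimage, Set.mem_Iio]
    rw [← neg_div, lt_div_iff₀ hs, mul_comm]
  rw [hpre, gauss_neg, gauss_tail_one]

lemma sphere_card {N : ℕ} (k : ℕ) (σ : Fin N → Bool) :
    (Finset.univ.filter fun τ => hamDist σ τ = k).card = N.choose k := by
  have hpc : (Finset.powersetCard k (Finset.univ : Finset (Fin N))).card = N.choose k := by
    rw [Finset.card_powersetCard, Finset.card_univ, Fintype.card_fin]
  rw [← hpc]
  apply Finset.card_bij (fun τ _ => Finset.univ.filter fun i => σ i ≠ τ i)
  · intro τ hτ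
    rw [Finset.mem_powersetCard]
    exact ⟨Finset.filter_subset _ _, (Finset.mem_filter.mp hτ).2⟩
  · intro τ₁ h₁ τ₂ h₂ h
    funext i
    have := Finset.ext_iff.mp h i
    simp only [Finset.mem_filter, Finset.mem_univ, true_and] at this
    revert this
    cases σ i <;> cases hb₁ : τ₁ i <;> cases hb₂ : τ₂ i <;> simp
  · intro s hs
    rw [Finset.mem_powersetCard] at hs
    refine ⟨fun j => if j ∈ s then !σ j else σ j, ?_, ?_⟩
    · have hfs : (Finset.univ.filter fun i => σ i ≠ if i ∈ s then !σ i else σ i) = s := by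
        ext j
        by_cases hj : j ∈ s <;> simp [hj]
      refine Finset.mem_filter.mpr ⟨Finset.mem_univ _, ?_⟩
      simp only [hamDist]
      rw [hfs]; exact hs.2
    · ext j
      by_cases hj : j ∈ s <;> simp [hj]

theorem stmt_16 {Ω : Type*} [MeasurableSpace Ω] (μ : Measure Ω) [IsProbabilityMeasure μ]
    (N p : ℕ) (hN : 1 ≤ N) (hp : 1 ≤ p)
    (ε δ : ℝ) (hε : ε ∈ Set.Ioo (0 : ℝ) 1) (hδ : δ ∈ Set.Ioo (0 : ℝ) 1)
    (r : ℝ) (hr0 : 0 < r) (hr1 : r < 1 / 2) (k : ℕ) (hk : (k : ℝ) = r * N)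
    (H : (Fin N → Bool) → Ω → ℝ) (hmeas : ∀ σ, Measurable (H σ))
    -- one-point marginals of the `p`-spin Gaussian process:
    (hlaw : ∀ σ, μ.map (H σ) = gaussianReal 0 N)
    -- for `τ` on the sphere of radius `rN` around `σ₀`, the Gaussian decomposition
    -- `G_{σ₀}(τ) = H(τ) - H(σ₀) c_p(r)` is centered Gaussian with variance `N(1-c_p(r)²)` …
    (hlawG : ∀ σ₀ τ : Fin N → Bool, hamDist σ₀ τ = k →
      μ.map (fun ω => H τ ω - H σ₀ ω * covFn p r) =
        gaussianReal 0 ((N * (1 - covFn p r ^ 2)).toNNReal))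
    -- … and independent of `H(σ₀)`:
    (hindep : ∀ σ₀ τ : Fin N → Bool, hamDist σ₀ τ = k →
      IndepFun (H σ₀) (fun ω => H τ ω - H σ₀ ω * covFn p r) μ) :
    (μ {ω | ∃ σ₀ : Fin N → Bool, betaC * (1 - ε) * N < -H σ₀ ω ∧
        ∃ τ : Fin N → Bool, hamDist σ₀ τ = k ∧
          H τ ω - H σ₀ ω * covFn p r <
            -(N * betaC * (1 - ε) * δ * (1 - covFn p r))}).toReal ≤
      2 ^ N * gaussTail (Real.sqrt N * betaC * (1 - ε)) * (N.choose k) *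
        gaussTail (Real.sqrt N * betaC * (1 - ε) * δ * (1 - covFn p r) /
          Real.sqrt (1 - covFn p r ^ 2)) := by
  obtain ⟨hε0, hε1⟩ := hε
  obtain ⟨hδ0, hδ1⟩ := hδ
  set c := covFn p r with hcdef
  have hc0 : 0 < c := pow_pos (by linarith) p
  have hc1 : c < 1 := by
    apply pow_lt_one₀ (by linarith) (by linarith) (by omega)
  have hc2 : c ^ 2 < 1 := by nlinarith
  have hN0 : (0:ℝ) < N := by exact_mod_cast hN
  have hvarB : (0:ℝ) < N * (1 - c ^ 2) := by nlinarith
  set tA : ℝ := betaC * (1 - ε) * N with htA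
  set tB : ℝ := N * betaC * (1 - ε) * δ * (1 - c) with htB
  set vB : ℝ≥0 := ((N:ℝ) * (1 - c ^ 2)).toNNReal with hvB
  have hvBne : vB ≠ 0 := by
    simp only [hvB, ne_eq, Real.toNNReal_eq_zero, not_le]
    exact hvarB
  have hNne : (N : ℝ≥0) ≠ 0 := by
    simp only [ne_eq, Nat.cast_eq_zero]
    omega
  set A : (Fin N → Bool) → Set Ω := fun σ₀ => H σ₀ ⁻¹' Set.Iio (-tA) with hA
  set B : (Fin N → Bool) → (Fin N → Bool) → Set Ω :=
    fun σ₀ τ => (fun ω => H τ ω - H σ₀ ω * c) ⁻¹' Set.Iio (-tB) with hB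
  set qA : ℝ≥0∞ := (gaussianReal 0 (N : ℝ≥0)) (Set.Iio (-tA)) with hqA
  set qB : ℝ≥0∞ := (gaussianReal 0 vB) (Set.Iio (-tB)) with hqB
  have hmuA : ∀ σ₀, μ (A σ₀) = qA := by
    intro σ₀
    rw [hA]
    rw [← Measure.map_apply (hmeas σ₀) measurableSet_Iio, hlaw σ₀]
  have hmeasG : ∀ σ₀ τ : Fin N → Bool, Measurable (fun ω => H τ ω - H σ₀ ω * c) :=
    fun σ₀ τ => (hmeas τ).sub ((hmeas σ₀).mul_const c)
  have hmuB : ∀ σ₀ τ, hamDist σ₀ τ = k → μ (B σ₀ τ) = qB := by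
    intro σ₀ τ hkk
    rw [hB]
    rw [← Measure.map_apply (hmeasG σ₀ τ) measurableSet_Iio, hlawG σ₀ τ hkk]
  have key : ∀ σ₀ τ, hamDist σ₀ τ = k → μ (A σ₀ ∩ B σ₀ τ) = qA * qB := by
    intro σ₀ τ hkk
    rw [(hindep σ₀ τ hkk).measure_inter_preimage_eq_mul _ _ measurableSet_Iio measurableSet_Iio]
    exact congrArg₂ (· * ·) (hmuA σ₀) (hmuB σ₀ τ hkk)
  -- union bound
  set F : (Fin N → Bool) → Finset (Fin N → Bool) :=
    fun σ₀ => Finset.univ.filter fun τ => hamDist σ₀ τ = k with hF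
  have hsub : {ω | ∃ σ₀ : Fin N → Bool, betaC * (1 - ε) * N < -H σ₀ ω ∧
        ∃ τ : Fin N → Bool, hamDist σ₀ τ = k ∧
          H τ ω - H σ₀ ω * c < -(N * betaC * (1 - ε) * δ * (1 - c))} ⊆
      ⋃ σ₀ ∈ (Finset.univ : Finset (Fin N → Bool)), ⋃ τ ∈ F σ₀, A σ₀ ∩ B σ₀ τ := by
    rintro ω ⟨σ₀, h1, τ, hkk, h2⟩
    refine Set.mem_biUnion (Finset.mem_univ σ₀) ?_
    refine Set.mem_biUnion (Finset.mem_filter.mpr ⟨Finset.mem_univ τ, hkk⟩) ?_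
    constructor
    · simp only [hA, Set.mem_preimage, Set.mem_Iio]
      linarith
    · simp only [hB, Set.mem_preimage, Set.mem_Iio]
      calc H τ ω - H σ₀ ω * c < -(N * betaC * (1 - ε) * δ * (1 - c)) := h2
        _ = -tB := by rw [htB]
  have hbound : μ {ω | ∃ σ₀ : Fin N → Bool, betaC * (1 - ε) * N < -H σ₀ ω ∧
        ∃ τ : Fin N → Bool, hamDist σ₀ τ = k ∧
          H τ ω - H σ₀ ω * c < -(N * betaC * (1 - ε) * δ * (1 - c))} ≤
      2 ^ N * (N.choose k) * (qA * qB) := by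
    calc μ _ ≤ μ (⋃ σ₀ ∈ (Finset.univ : Finset (Fin N → Bool)), ⋃ τ ∈ F σ₀, A σ₀ ∩ B σ₀ τ) :=
          measure_mono hsub
      _ ≤ ∑ σ₀ ∈ Finset.univ, μ (⋃ τ ∈ F σ₀, A σ₀ ∩ B σ₀ τ) := measure_biUnion_finset_le _ _
      _ ≤ ∑ σ₀ ∈ Finset.univ, ∑ τ ∈ F σ₀, μ (A σ₀ ∩ B σ₀ τ) :=
          Finset.sum_le_sum fun σ₀ _ => measure_biUnion_finset_le _ _
      _ = ∑ σ₀ ∈ Finset.univ, ∑ τ ∈ F σ₀, (qA * qB) := by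
          refine Finset.sum_congr rfl fun σ₀ _ => Finset.sum_congr rfl fun τ hτ => ?_
          exact key σ₀ τ (Finset.mem_filter.mp hτ).2
      _ = ∑ σ₀ ∈ (Finset.univ : Finset (Fin N → Bool)), (N.choose k : ℝ≥0∞) * (qA * qB) := by
          refine Finset.sum_congr rfl fun σ₀ _ => ?_
          rw [Finset.sum_const, hF, sphere_card k σ₀, nsmul_eq_mul]
      _ = 2 ^ N * (N.choose k) * (qA * qB) := by
          rw [Finset.sum_const, Finset.card_univ, nsmul_eq_mul, ← mul_assoc]
          congr 2
          rw [Fintype.card_fun, Fintype.card_bool, Fintype.card_fin]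
          push_cast
          ring
  -- pass to real numbers
  have hqAne : qA ≠ ⊤ := measure_ne_top _ _
  have hqBne : qB ≠ ⊤ := measure_ne_top _ _
  have hRHSne : (2 ^ N * (N.choose k : ℝ≥0∞) * (qA * qB)) ≠ ⊤ := by
    apply ENNReal.mul_ne_top
    apply ENNReal.mul_ne_top
    · exact ENNReal.pow_ne_top ENNReal.ofNat_ne_top
    · exact ENNReal.natCast_ne_top _
    · exact ENNReal.mul_ne_top hqAne hqBne
  have hmono := ENNReal.toReal_mono hRHSne hbound
  refine le_trans hmono ?_
  rw [ENNReal.toReal_mul, ENNReal.toReal_mul, ENNReal.toReal_mul]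
  have hqAval : qA.toReal = gaussTail (Real.sqrt N * betaC * (1 - ε)) := by
    rw [hqA, gauss_tail_var _ hNne]
    congr 1
    rw [NNReal.coe_natCast, htA]
    have hsN : (0:ℝ) < Real.sqrt N := Real.sqrt_pos.mpr hN0
    have hss : Real.sqrt N * Real.sqrt N = (N:ℝ) := Real.mul_self_sqrt hN0.le
    rw [div_eq_iff hsN.ne']
    linear_combination (-(betaC * (1 - ε))) * hss
  have hqBval : qB.toReal = gaussTail (Real.sqrt N * betaC * (1 - ε) * δ * (1 - c) /
      Real.sqrt (1 - c ^ 2)) := by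
    rw [hqB, gauss_tail_var _ hvBne]
    congr 1
    rw [hvB, Real.coe_toNNReal _ hvarB.le, Real.sqrt_mul hN0.le]
    have hsN : (0:ℝ) < Real.sqrt N := Real.sqrt_pos.mpr hN0
    have hC0 : (0:ℝ) < 1 - c ^ 2 := by linarith
    have hsC : (0:ℝ) < Real.sqrt (1 - c ^ 2) := Real.sqrt_pos.mpr hC0
    have hss : Real.sqrt N * Real.sqrt N = (N:ℝ) := Real.mul_self_sqrt hN0.le
    rw [div_eq_div_iff (mul_pos hsN hsC).ne' hsC.ne', htB]
    linear_combination (-(betaC * (1 - ε) * δ * (1 - c) * Real.sqrt (1 - c ^ 2))) * hss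
  rw [hqAval, hqBval]
  rw [ENNReal.toReal_pow, ENNReal.toReal_ofNat, ENNReal.toReal_natCast]
  have h1 : 0 ≤ gaussTail (Real.sqrt N * betaC * (1 - ε)) := by
    rw [← hqAval]; exact ENNReal.toReal_nonneg
  have h2 : 0 ≤ gaussTail (Real.sqrt N * betaC * (1 - ε) * δ * (1 - c) /
      Real.sqrt (1 - c ^ 2)) := by
    rw [← hqBval]; exact ENNReal.toReal_nonneg
  apply le_of_eq
  ring
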